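/- Let w ∈ Ŵ be a dominant element of the affine Weyl group. Then for every simple root α ∈ Π: (i) (|N(w)|, α) ≤ 0; and (ii) (|N(w)|, α) = 0 if and only if w(α) is an affine simple root, i.e. w(α) ∈ Π̂. -/

import Mathlib

open scoped RealInnerProductSpace
open scoped Classical

set_option linter.unusedSectionVars false

noncomputable section

/-- Axiomatization of the root system (with a fixed base and positive system) of a
complex simple Lie algebra `g` with Cartan subalgebra `t ⊆ b`: a finite, reduced,
crystallographic root system, invariant under its reflections, in a euclidean vector
space `V` (the real span of the roots, with a Weyl-group-invariant inner product),
together with the set `Pi` of simple roots and the set `Δpos` of positive roots. -/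
structure RootSystemData (V : Type*) [NormedAddCommGroup V] [InnerProductSpace ℝ V]
    [FiniteDimensional ℝ V] where
  /-- the set of all roots -/
  Δ : Finset V
  /-- the set of simple roots -/
  Pi : Finset V
  /-- the set of positive roots -/
  Δpos : Finset V
  zero_not_mem : (0 : V) ∉ Δ
  neg_mem : ∀ ⦃α⦄, α ∈ Δ → -α ∈ Δ
  reflect_mem : ∀ ⦃α⦄, α ∈ Δ → ∀ ⦃β⦄, β ∈ Δ → β - (2 * ⟪β, α⟫ / ⟪α, α⟫) • α ∈ Δ
  crystallographic : ∀ ⦃α⦄, α ∈ Δ → ∀ ⦃β⦄, β ∈ Δ → ∃ n : ℤ, 2 * ⟪β, α⟫ = n * ⟪α, α⟫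
  reduced : ∀ ⦃α⦄, α ∈ Δ → ∀ t : ℝ, t • α ∈ Δ → t = 1 ∨ t = -1
  Pi_subset : Pi ⊆ Δpos
  Pi_indep : LinearIndependent ℝ (Subtype.val : {x : V // x ∈ Pi} → V)
  Pi_span : Submodule.span ℝ (Pi : Set V) = ⊤
  Δpos_subset : Δpos ⊆ Δ
  mem_Δpos_iff : ∀ ⦃γ⦄, γ ∈ Δ →
    (γ ∈ Δpos ↔ ∃ c : V → ℕ, γ = ∑ α ∈ Pi, (c α : ℝ) • α)
  pos_or_neg : ∀ ⦃γ⦄, γ ∈ Δ → γ ∈ Δpos ∨ -γ ∈ Δpos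

variable {V : Type*} [NormedAddCommGroup V] [InnerProductSpace ℝ V] [FiniteDimensional ℝ V]

/-- `θ` is the highest root: `θ ∈ Δ⁺` and `γ ≼ θ` for every positive root `γ`. -/
def RootSystemData.IsHighestRoot (R : RootSystemData V) (θ : V) : Prop :=
  θ ∈ R.Δpos ∧ ∀ γ ∈ R.Δpos, ∃ c : V → ℕ, θ - γ = ∑ α ∈ R.Pi, (c α : ℝ) • α

/-- The extended space `V̂ = V ⊕ ℝδ ⊕ ℝλ`, with `δ = (0,1,0)` and `λ = (0,0,1)`. -/
abbrev AffSpace (V : Type*) := V × ℝ × ℝ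

/-- The extension of the inner product to `V̂`:
`(δ,V) = (λ,V) = (δ,δ) = (λ,λ) = 0` and `(δ,λ) = 1`. -/
def affForm (x y : AffSpace V) : ℝ := ⟪x.1, y.1⟫ + x.2.1 * y.2.2 + x.2.2 * y.2.1

/-- The basic imaginary root `δ`. -/
def affDelta (V : Type*) [NormedAddCommGroup V] [InnerProductSpace ℝ V] : AffSpace V :=
  (0, 1, 0)

/-- The element `λ`, with `(δ, λ) = 1`. -/
def affLambda (V : Type*) [NormedAddCommGroup V] [InnerProductSpace ℝ V] : AffSpace V :=
  (0, 0, 1)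

/-- The canonical embedding `V → V̂`. -/
def affIota (v : V) : AffSpace V := (v, 0, 0)

lemma affForm_add_left (x y z : AffSpace V) :
    affForm (x + y) z = affForm x z + affForm y z := by
  simp [affForm, inner_add_left]; ring

lemma affForm_smul_left (a : ℝ) (x z : AffSpace V) :
    affForm (a • x) z = a * affForm x z := by
  simp [affForm, real_inner_smul_left]; ring

/-- The reflection of `V̂` in (the hyperplane orthogonal to) `β`, as a linear map:
`x ↦ x - (x, β∨) β`. -/
def affReflectMap (β : AffSpace V) : AffSpace V →ₗ[ℝ] AffSpace V where
  toFun x := x - (2 * affForm x β / affForm β β) • β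
  map_add' x y := by
    try dsimp only
    rw [affForm_add_left, mul_add, add_div, add_smul]
    abel
  map_smul' a x := by
    dsimp only [RingHom.id_apply]
    rw [affForm_smul_left, smul_sub, smul_smul]
    congr 2
    ring

lemma affReflectMap_involutive (β : AffSpace V) :
    Function.Involutive (affReflectMap (V := V) β) := by
  intro x
  show (affReflectMap β) ((affReflectMap β) x) = x
  simp only [affReflectMap, LinearMap.coe_mk, AddHom.coe_mk]
  set c := affForm β β with hc0
  set t := 2 * affForm x β / c with ht
  have hF : affForm (x - t • β) β = affForm x β - t * c := by
    have h1 : x - t • β = x + (-t) • β := by rw [neg_smul]; abel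
    rw [h1, affForm_add_left, affForm_smul_left]; ring
  have key : 2 * affForm (x - t • β) β / c = -t := by
    rw [hF, ht]
    by_cases hc : c = 0
    · simp [hc]
    · field_simp
      ring
  rw [key, neg_smul]
  abel

/-- The reflection of `V̂` in `β`, as a linear automorphism. -/
def affReflect (β : AffSpace V) : AffSpace V ≃ₗ[ℝ] AffSpace V :=
  LinearEquiv.ofLinear (affReflectMap β) (affReflectMap β)
    (LinearMap.ext fun x => affReflectMap_involutive β x)
    (LinearMap.ext fun x => affReflectMap_involutive β x)

/-- The set `Π̂ = Π ∪ {α₀}` of affine simple roots, where `α₀ = δ - θ`. -/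
def affSimpleRoots (R : RootSystemData V) (θ : V) : Set (AffSpace V) :=
  (fun α => affIota α) '' (R.Pi : Set V) ∪ {affDelta V - affIota θ}

/-- The set `Δ̂⁺ = Δ⁺ ∪ {μ + kδ : μ ∈ Δ, k ≥ 1}` of positive affine roots. -/
def affPosRoots (R : RootSystemData V) : Set (AffSpace V) :=
  (fun μ => affIota μ) '' (R.Δpos : Set V) ∪
    {x | ∃ μ ∈ R.Δ, ∃ k : ℕ, 1 ≤ k ∧ x = affIota μ + (k : ℝ) • affDelta V}

/-- The affine Weyl group `Ŵ`, realized through its linear action on `V̂`: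
the subgroup of `GL(V̂)` generated by the reflections in the affine simple roots. -/
def affWeylGroup (R : RootSystemData V) (θ : V) :
    Subgroup (AffSpace V ≃ₗ[ℝ] AffSpace V) :=
  Subgroup.closure (affReflect '' affSimpleRoots R θ)

/-- `N(w) = {μ ∈ Δ̂⁺ : w(μ) ∈ -Δ̂⁺}`. -/
def affInversionSet (R : RootSystemData V) (w : AffSpace V ≃ₗ[ℝ] AffSpace V) :
    Set (AffSpace V) :=
  {x | x ∈ affPosRoots R ∧ -(w x) ∈ affPosRoots R}

/-- `|N(w)| = Σ_{μ ∈ N(w)} μ` (a finite sum whenever `w ∈ Ŵ`). -/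
def affInversionSum (R : RootSystemData V) (w : AffSpace V ≃ₗ[ℝ] AffSpace V) :
    AffSpace V :=
  ∑ᶠ x ∈ affInversionSet R w, x

/-- `w ∈ Ŵ` is dominant if `w(α) ∈ Δ̂⁺` for every `α ∈ Π`. -/
def IsDominant (R : RootSystemData V) (w : AffSpace V ≃ₗ[ℝ] AffSpace V) : Prop :=
  ∀ α ∈ R.Pi, w (affIota α) ∈ affPosRoots R

/-! ### Auxiliary development -/

namespace StmtAux

variable {V : Type*} [NormedAddCommGroup V] [InnerProductSpace ℝ V] [FiniteDimensional ℝ V]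

lemma affForm_symm (x y : AffSpace V) : affForm x y = affForm y x := by
  simp only [affForm, real_inner_comm]; ring

lemma affForm_add_right (x y z : AffSpace V) :
    affForm x (y + z) = affForm x y + affForm x z := by
  rw [affForm_symm, affForm_add_left, affForm_symm y x, affForm_symm z x]

lemma affForm_smul_right (a : ℝ) (x z : AffSpace V) :
    affForm x (a • z) = a * affForm x z := by
  rw [affForm_symm, affForm_smul_left, affForm_symm z x]

lemma affForm_neg_right (x z : AffSpace V) : affForm x (-z) = -affForm x z := by
  have h := affForm_smul_right (-1 : ℝ) x z
  simpa using h

lemma affForm_neg_left (x z : AffSpace V) : affForm (-x) z = -affForm x z := by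
  rw [affForm_symm, affForm_neg_right, affForm_symm]

lemma affForm_sub_right (x y z : AffSpace V) :
    affForm x (y - z) = affForm x y - affForm x z := by
  rw [sub_eq_add_neg, affForm_add_right, affForm_neg_right, sub_eq_add_neg]

lemma affForm_sub_left (x y z : AffSpace V) :
    affForm (x - y) z = affForm x z - affForm y z := by
  rw [affForm_symm, affForm_sub_right, affForm_symm z x, affForm_symm z y]

def affFormHom (y : AffSpace V) : AffSpace V →+ ℝ :=
  AddMonoidHom.mk' (fun x => affForm x y) (fun a b => affForm_add_left a b y)

lemma affForm_sum_left {ι : Type*} (s : Finset ι) (f : ι → AffSpace V) (y : AffSpace V) :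
    affForm (∑ i ∈ s, f i) y = ∑ i ∈ s, affForm (f i) y :=
  map_sum (affFormHom y) f s

lemma affForm_sum_right {ι : Type*} (s : Finset ι) (y : AffSpace V) (f : ι → AffSpace V) :
    affForm y (∑ i ∈ s, f i) = ∑ i ∈ s, affForm y (f i) := by
  rw [affForm_symm, affForm_sum_left]
  exact Finset.sum_congr rfl fun i _ => affForm_symm _ _

lemma affForm_mk (μ ν : V) (a b c d : ℝ) :
    affForm ((μ, a, b) : AffSpace V) ((ν, c, d) : AffSpace V) = ⟪μ, ν⟫ + a * d + b * c := rfl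

lemma affForm_iota_iota (μ ν : V) : affForm (affIota μ) (affIota ν) = ⟪μ, ν⟫ := by
  show ⟪μ, ν⟫ + 0 * 0 + 0 * 0 = ⟪μ, ν⟫; ring

lemma affReflect_apply (β x : AffSpace V) :
    affReflect β x = x - (2 * affForm x β / affForm β β) • β := rfl

lemma affReflect_inv (β : AffSpace V) : (affReflect β)⁻¹ = affReflect β := by
  apply LinearEquiv.ext; intro x
  show (affReflect β).symm x = affReflect β x
  rw [affReflect, LinearEquiv.ofLinear_symm_apply, LinearEquiv.ofLinear_apply]

lemma affForm_reflect_reflect (β x y : AffSpace V) :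
    affForm (affReflect β x) (affReflect β y) = affForm x y := by
  rcases eq_or_ne (affForm β β) 0 with h | h
  · simp [affReflect_apply, h]
  · rw [affReflect_apply, affReflect_apply, affForm_sub_left, affForm_sub_right,
      affForm_sub_right, affForm_smul_left, affForm_smul_right, affForm_smul_right,
      affForm_smul_left, affForm_symm β y]
    field_simp
    ring

lemma affIota_add (x y : V) : affIota (x + y) = affIota x + affIota y := by
  simp [affIota, Prod.ext_iff]

def affIotaHom : V →+ AffSpace V := AddMonoidHom.mk' affIota affIota_add

lemma affIota_sum {ι : Type*} (s : Finset ι) (f : ι → V) :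
    affIota (∑ i ∈ s, f i) = ∑ i ∈ s, affIota (f i) :=
  map_sum (affIotaHom (V := V)) f s

lemma affIota_smul (t : ℝ) (x : V) : affIota (t • x) = t • affIota x := by
  simp [affIota, Prod.ext_iff]

end StmtAux
namespace StmtAux

variable {V : Type*} [NormedAddCommGroup V] [InnerProductSpace ℝ V] [FiniteDimensional ℝ V]

/-- The set of (real) affine roots, `Δ̂ = {μ + kδ : μ ∈ Δ, k ∈ ℤ}`. -/
def ahat (R : RootSystemData V) : Set (AffSpace V) :=
  {x | ∃ μ ∈ R.Δ, ∃ k : ℤ, x = (μ, (k : ℝ), (0 : ℝ))}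

lemma mem_affPosRoots_iff (R : RootSystemData V) (x : AffSpace V) :
    x ∈ affPosRoots R ↔
      (∃ μ ∈ R.Δpos, x = ((μ, (0:ℝ), (0:ℝ)) : AffSpace V)) ∨
      (∃ μ ∈ R.Δ, ∃ k : ℕ, 1 ≤ k ∧ x = ((μ, (k : ℝ), (0:ℝ)) : AffSpace V)) := by
  have h2 : ∀ (μ : V) (k : ℕ),
      affIota μ + (k : ℝ) • affDelta V = ((μ, (k:ℝ), (0:ℝ)) : AffSpace V) := by
    intro μ k
    simp [affIota, affDelta, Prod.ext_iff]
  unfold affPosRoots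
  simp only [Set.mem_union, Set.mem_image, Finset.mem_coe, Set.mem_setOf_eq]
  constructor
  · rintro (⟨μ, hμ, rfl⟩ | ⟨μ, hμ, k, hk, rfl⟩)
    · exact Or.inl ⟨μ, hμ, rfl⟩
    · exact Or.inr ⟨μ, hμ, k, hk, h2 μ k⟩
  · rintro (⟨μ, hμ, hx⟩ | ⟨μ, hμ, k, hk, hx⟩)
    · exact Or.inl ⟨μ, hμ, hx.symm⟩
    · exact Or.inr ⟨μ, hμ, k, hk, (hx.trans (h2 μ k).symm)⟩

lemma affPos_subset_ahat (R : RootSystemData V) : affPosRoots R ⊆ ahat R := by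
  intro x hx
  rcases (mem_affPosRoots_iff R x).1 hx with ⟨μ, hμ, rfl⟩ | ⟨μ, hμ, k, _, rfl⟩
  · exact ⟨μ, R.Δpos_subset hμ, 0, by norm_num⟩
  · exact ⟨μ, hμ, (k : ℤ), by push_cast; rfl⟩

lemma root_inner_pos (R : RootSystemData V) {μ : V} (hμ : μ ∈ R.Δ) : 0 < ⟪μ, μ⟫ := by
  have h0 : μ ≠ 0 := fun h => R.zero_not_mem (h ▸ hμ)
  rw [real_inner_self_eq_norm_mul_norm]
  have : 0 < ‖μ‖ := norm_pos_iff.mpr h0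
  positivity

lemma pi_sum_eq_zero (R : RootSystemData V) (f : V → ℝ)
    (h : (∑ a ∈ R.Pi, f a • a) = 0) : ∀ b ∈ R.Pi, f b = 0 := by
  have h2 : ∑ i : {x : V // x ∈ R.Pi}, f i.1 • i.1 = 0 := by
    rw [Finset.sum_coe_sort R.Pi (fun a => f a • a)]; exact h
  have h3 := Fintype.linearIndependent_iff.mp R.Pi_indep (fun i => f i.1) h2
  intro b hb; exact h3 ⟨b, hb⟩

lemma not_neg_mem_Δpos (R : RootSystemData V) {μ : V} (h1 : μ ∈ R.Δpos)
    (h2 : -μ ∈ R.Δpos) : False := by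
  obtain ⟨c, hc⟩ := (R.mem_Δpos_iff (R.Δpos_subset h1)).1 h1
  obtain ⟨c', hc'⟩ := (R.mem_Δpos_iff (R.Δpos_subset h2)).1 h2
  have hsum : (∑ a ∈ R.Pi, ((c a : ℝ) + (c' a : ℝ)) • a) = 0 := by
    simp only [add_smul, Finset.sum_add_distrib]
    rw [← hc, ← hc']; abel
  have hall := pi_sum_eq_zero R _ hsum
  have hμ0 : μ = 0 := by
    rw [hc]
    apply Finset.sum_eq_zero
    intro a ha
    have h := hall a ha
    have h1' : (0:ℝ) ≤ (c a : ℝ) := Nat.cast_nonneg _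
    have h2' : (0:ℝ) ≤ (c' a : ℝ) := Nat.cast_nonneg _
    have : (c a : ℝ) = 0 := by linarith
    rw [this, zero_smul]
  exact R.zero_not_mem (hμ0 ▸ R.Δpos_subset h1)

/-- `Σ c_i α_i + n₀ α₀` written out as an explicit element of `V̂`. -/
def comb (R : RootSystemData V) (θ : V) (c : V → ℕ) (n₀ : ℕ) : AffSpace V :=
  ((∑ a ∈ R.Pi, (c a : ℝ) • a) - (n₀ : ℝ) • θ, (n₀ : ℝ), (0:ℝ))

lemma affA0_eq (θ : V) : affDelta V - affIota θ = (((-θ : V), (1:ℝ), (0:ℝ)) : AffSpace V) := by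
  simp [affDelta, affIota, Prod.ext_iff]

lemma comb_eq_sum (R : RootSystemData V) (θ : V) (c : V → ℕ) (n₀ : ℕ) :
    comb R θ c n₀ =
      (∑ a ∈ R.Pi, (c a : ℝ) • affIota a) + (n₀ : ℝ) • (affDelta V - affIota θ) := by
  have h1 : (∑ a ∈ R.Pi, (c a : ℝ) • affIota a) = affIota (∑ a ∈ R.Pi, (c a : ℝ) • a) := by
    rw [affIota_sum]
    exact Finset.sum_congr rfl fun a _ => (affIota_smul _ _).symm
  rw [h1, affA0_eq]
  simp [comb, affIota, Prod.ext_iff, sub_eq_add_neg]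

lemma pos_decomp (R : RootSystemData V) (θ : V) (hθ : R.IsHighestRoot θ)
    {x : AffSpace V} (hx : x ∈ affPosRoots R) :
    ∃ c : V → ℕ, ∃ n₀ : ℕ, x = comb R θ c n₀ := by
  obtain ⟨c2, hc2⟩ := (R.mem_Δpos_iff (R.Δpos_subset hθ.1)).1 hθ.1
  rcases (mem_affPosRoots_iff R x).1 hx with ⟨μ, hμ, rfl⟩ | ⟨μ, hμ, k, hk, rfl⟩
  · obtain ⟨c1, hc1⟩ := (R.mem_Δpos_iff (R.Δpos_subset hμ)).1 hμ
    refine ⟨c1, 0, ?_⟩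
    simp [comb, ← hc1, Prod.ext_iff]
  · -- need d with μ + k θ = Σ d
    have key : ∃ d : V → ℕ, μ + (k:ℝ) • θ = ∑ a ∈ R.Pi, (d a : ℝ) • a := by
      rcases R.pos_or_neg hμ with hp | hn
      · obtain ⟨c1, hc1⟩ := (R.mem_Δpos_iff hμ).1 hp
        refine ⟨fun a => c1 a + k * c2 a, ?_⟩
        have : ∀ a ∈ R.Pi, ((c1 a + k * c2 a : ℕ) : ℝ) • a
            = (c1 a : ℝ) • a + (k:ℝ) • ((c2 a : ℝ) • a) := by
          intro a _
          push_cast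
          rw [add_smul, smul_smul]
        rw [Finset.sum_congr rfl this, Finset.sum_add_distrib, ← Finset.smul_sum, ← hc1, ← hc2]
      · obtain ⟨c3, hc3⟩ := hθ.2 (-μ) hn
        refine ⟨fun a => c3 a + (k - 1) * c2 a, ?_⟩
        have : ∀ a ∈ R.Pi, ((c3 a + (k - 1) * c2 a : ℕ) : ℝ) • a
            = (c3 a : ℝ) • a + ((k:ℝ) - 1) • ((c2 a : ℝ) • a) := by
          intro a _
          have : (((k - 1 : ℕ)) : ℝ) = (k : ℝ) - 1 := by
            have := Nat.cast_sub (R := ℝ) hk; simpa using this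
          push_cast [this]
          rw [add_smul, smul_smul]
        rw [Finset.sum_congr rfl this, Finset.sum_add_distrib, ← Finset.smul_sum, ← hc2]
        have h3 : (∑ a ∈ R.Pi, (c3 a : ℝ) • a) = θ + μ := by
          rw [← hc3]; abel
        rw [h3]
        module
    obtain ⟨d, hd⟩ := key
    refine ⟨d, k, ?_⟩
    have hfst : (∑ a ∈ R.Pi, (d a : ℝ) • a) - (k:ℝ) • θ = μ := by
      rw [← hd]; abel
    simp [comb, hfst]

end StmtAux
namespace StmtAux

variable {V : Type*} [NormedAddCommGroup V] [InnerProductSpace ℝ V] [FiniteDimensional ℝ V]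

/-- A vector `ρ ∈ V` with `(ρ, αᵢ) = (αᵢ,αᵢ)/2` for every simple root. -/
def rho (R : RootSystemData V) : V :=
  (InnerProductSpace.toDual ℝ V).symm
    ((((Module.Basis.mk R.Pi_indep (by
        rw [Subtype.range_coe_subtype, Finset.setOf_mem]
        exact R.Pi_span.ge)).constr ℝ)
      (fun i => ⟪(i : V), (i : V)⟫ / 2)).toContinuousLinearMap)

lemma rho_inner (R : RootSystemData V) {a : V} (ha : a ∈ R.Pi) :
    ⟪rho R, a⟫ = ⟪a, a⟫ / 2 := by
  unfold rho
  rw [InnerProductSpace.toDual_symm_apply]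
  rw [LinearMap.coe_toContinuousLinearMap']
  have hb := Module.Basis.mk_apply R.Pi_indep (by
      rw [Subtype.range_coe_subtype, Finset.setOf_mem]
      exact R.Pi_span.ge) (⟨a, ha⟩ : {x : V // x ∈ R.Pi})
  conv_lhs => rw [show a = (⟨a, ha⟩ : {x : V // x ∈ R.Pi}).1 from rfl, ← hb]
  rw [Module.Basis.constr_basis]

/-- The affine analogue `ρ̂` of `ρ`: satisfies `(ρ̂, β) = (β,β)/2` for every
affine simple root `β`. -/
def rhoHat (R : RootSystemData V) (θ : V) : AffSpace V :=
  (rho R, (0:ℝ), ⟪θ, θ⟫ / 2 + ⟪rho R, θ⟫)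

lemma rhoHat_iota (R : RootSystemData V) (θ : V) {a : V} (ha : a ∈ R.Pi) :
    affForm (rhoHat R θ) (affIota a) = ⟪a, a⟫ / 2 := by
  show ⟪rho R, a⟫ + 0 * 0 + (⟪θ, θ⟫ / 2 + ⟪rho R, θ⟫) * 0 = ⟪a, a⟫ / 2
  rw [rho_inner R ha]; ring

lemma rhoHat_a0 (R : RootSystemData V) (θ : V) :
    affForm (rhoHat R θ) (affDelta V - affIota θ) = ⟪θ, θ⟫ / 2 := by
  rw [affA0_eq]
  show ⟪rho R, -θ⟫ + 0 * 0 + (⟪θ, θ⟫ / 2 + ⟪rho R, θ⟫) * 1 = ⟪θ, θ⟫ / 2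
  rw [inner_neg_right]; ring

lemma affForm_a0_a0 (θ : V) :
    affForm (affDelta V - affIota θ) (affDelta V - affIota θ) = ⟪θ, θ⟫ := by
  rw [affA0_eq]
  show ⟪-θ, -θ⟫ + 1 * 0 + 0 * 1 = ⟪θ, θ⟫
  rw [inner_neg_neg]; ring

lemma mem_affSimple_iff (R : RootSystemData V) (θ : V) (x : AffSpace V) :
    x ∈ affSimpleRoots R θ ↔
      (∃ a ∈ R.Pi, x = affIota a) ∨ x = affDelta V - affIota θ := by
  unfold affSimpleRoots
  simp only [Set.mem_union, Set.mem_image, Finset.mem_coe, Set.mem_singleton_iff]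
  constructor
  · rintro (⟨a, ha, rfl⟩ | h)
    · exact Or.inl ⟨a, ha, rfl⟩
    · exact Or.inr h
  · rintro (⟨a, ha, rfl⟩ | h)
    · exact Or.inl ⟨a, ha, rfl⟩
    · exact Or.inr h

lemma theta_mem_Δ (R : RootSystemData V) {θ : V} (hθ : R.IsHighestRoot θ) : θ ∈ R.Δ :=
  R.Δpos_subset hθ.1

lemma simple_subset_pos (R : RootSystemData V) {θ : V} (hθ : R.IsHighestRoot θ) :
    affSimpleRoots R θ ⊆ affPosRoots R := by
  intro x hx
  rcases (mem_affSimple_iff R θ x).1 hx with ⟨a, ha, rfl⟩ | rfl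
  · exact (mem_affPosRoots_iff R _).2 (Or.inl ⟨a, R.Pi_subset ha, rfl⟩)
  · refine (mem_affPosRoots_iff R _).2 (Or.inr ⟨-θ, R.neg_mem (theta_mem_Δ R hθ), 1, le_refl 1, ?_⟩)
    rw [affA0_eq]; norm_num

lemma simple_form_pos (R : RootSystemData V) {θ : V} (hθ : R.IsHighestRoot θ)
    {b : AffSpace V} (hb : b ∈ affSimpleRoots R θ) : 0 < affForm b b := by
  rcases (mem_affSimple_iff R θ b).1 hb with ⟨a, ha, rfl⟩ | rfl
  · rw [affForm_iota_iota]
    exact root_inner_pos R (R.Δpos_subset (R.Pi_subset ha))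
  · rw [affForm_a0_a0]
    exact root_inner_pos R (theta_mem_Δ R hθ)

lemma rhoHat_simple (R : RootSystemData V) (θ : V)
    {b : AffSpace V} (hb : b ∈ affSimpleRoots R θ) :
    affForm (rhoHat R θ) b = affForm b b / 2 := by
  rcases (mem_affSimple_iff R θ b).1 hb with ⟨a, ha, rfl⟩ | rfl
  · rw [rhoHat_iota R θ ha, affForm_iota_iota]
  · rw [rhoHat_a0, affForm_a0_a0]

lemma simple_pairing_int (R : RootSystemData V) {θ : V} (hθ : R.IsHighestRoot θ)
    {b : AffSpace V} (hb : b ∈ affSimpleRoots R θ)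
    {x : AffSpace V} (hx : x ∈ ahat R) :
    ∃ n : ℤ, 2 * affForm x b = n * affForm b b := by
  obtain ⟨μ, hμ, k, rfl⟩ := hx
  rcases (mem_affSimple_iff R θ b).1 hb with ⟨a, ha, rfl⟩ | rfl
  · have h1 : affForm ((μ, (k:ℝ), (0:ℝ)) : AffSpace V) (affIota a) = ⟪μ, a⟫ := by
      show ⟪μ, a⟫ + (k:ℝ) * 0 + 0 * 0 = ⟪μ, a⟫; ring
    obtain ⟨n, hn⟩ := R.crystallographic (R.Δpos_subset (R.Pi_subset ha)) hμ
    exact ⟨n, by rw [h1, affForm_iota_iota]; exact hn⟩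
  · have h1 : affForm ((μ, (k:ℝ), (0:ℝ)) : AffSpace V) (affDelta V - affIota θ)
        = -⟪μ, θ⟫ := by
      rw [affA0_eq]
      show ⟪μ, -θ⟫ + (k:ℝ) * 0 + 0 * 1 = -⟪μ, θ⟫
      rw [inner_neg_right]; ring
    obtain ⟨n, hn⟩ := R.crystallographic (theta_mem_Δ R hθ) hμ
    refine ⟨-n, ?_⟩
    rw [h1, affForm_a0_a0]
    push_cast
    linarith

lemma pos_or_neg_ahat (R : RootSystemData V) {x : AffSpace V} (hx : x ∈ ahat R) :
    x ∈ affPosRoots R ∨ -x ∈ affPosRoots R := by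
  obtain ⟨μ, hμ, k, rfl⟩ := hx
  rcases lt_trichotomy k 0 with hk | hk | hk
  · right
    refine (mem_affPosRoots_iff R _).2 (Or.inr ⟨-μ, R.neg_mem hμ, (-k).toNat, by omega, ?_⟩)
    have : (((-k).toNat : ℕ) : ℝ) = -(k : ℝ) := by
      have h1 : ((-k).toNat : ℤ) = -k := Int.toNat_of_nonneg (by omega)
      exact_mod_cast congrArg (fun z : ℤ => (z : ℝ)) h1
    simp [Prod.ext_iff, this]
  · subst hk
    rcases R.pos_or_neg hμ with hp | hn
    · exact Or.inl ((mem_affPosRoots_iff R _).2 (Or.inl ⟨μ, hp, by norm_num⟩))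
    · refine Or.inr ((mem_affPosRoots_iff R _).2 (Or.inl ⟨-μ, hn, ?_⟩))
      simp [Prod.ext_iff]
  · left
    refine (mem_affPosRoots_iff R _).2 (Or.inr ⟨μ, hμ, k.toNat, by omega, ?_⟩)
    have : ((k.toNat : ℕ) : ℝ) = (k : ℝ) := by
      have h1 : (k.toNat : ℤ) = k := Int.toNat_of_nonneg (by omega)
      exact_mod_cast congrArg (fun z : ℤ => (z : ℝ)) h1
    simp [Prod.ext_iff, this]

lemma pos_neg_disj (R : RootSystemData V) {x : AffSpace V}
    (h1 : x ∈ affPosRoots R) (h2 : -x ∈ affPosRoots R) : False := by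
  rcases (mem_affPosRoots_iff R x).1 h1 with ⟨μ, hμ, rfl⟩ | ⟨μ, hμ, k, hk, rfl⟩ <;>
    rcases (mem_affPosRoots_iff R _).1 h2 with ⟨ν, hν, hy⟩ | ⟨ν, hν, l, hl, hy⟩
  · have hνμ : ν = -μ := by
      have := congrArg Prod.fst hy
      simpa using this.symm
    exact not_neg_mem_Δpos R hμ (hνμ ▸ hν)
  · have := congrArg (fun z : AffSpace V => z.2.1) hy
    simp at this
    have hl' : (1:ℝ) ≤ (l:ℝ) := by exact_mod_cast hl
    linarith [this]
  · have := congrArg (fun z : AffSpace V => z.2.1) hy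
    simp at this
    have hk' : (1:ℝ) ≤ (k:ℝ) := by exact_mod_cast hk
    linarith [this]
  · have := congrArg (fun z : AffSpace V => z.2.1) hy
    simp at this
    have hk' : (1:ℝ) ≤ (k:ℝ) := by exact_mod_cast hk
    have hl' : (1:ℝ) ≤ (l:ℝ) := by exact_mod_cast hl
    linarith [this]

lemma zero_not_pos (R : RootSystemData V) : (0 : AffSpace V) ∉ affPosRoots R := by
  intro h
  exact pos_neg_disj R h (by rwa [neg_zero])

end StmtAux
namespace StmtAux

variable {V : Type*} [NormedAddCommGroup V] [InnerProductSpace ℝ V] [FiniteDimensional ℝ V]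

lemma reflect_mem_ahat (R : RootSystemData V) {θ : V} (hθ : R.IsHighestRoot θ)
    {b : AffSpace V} (hb : b ∈ affSimpleRoots R θ)
    {x : AffSpace V} (hx : x ∈ ahat R) : affReflect b x ∈ ahat R := by
  obtain ⟨μ, hμ, k, rfl⟩ := hx
  rcases (mem_affSimple_iff R θ b).1 hb with ⟨a, ha, rfl⟩ | rfl
  · have haΔ : a ∈ R.Δ := R.Δpos_subset (R.Pi_subset ha)
    have h1 : affForm ((μ, (k:ℝ), (0:ℝ)) : AffSpace V) (affIota a) = ⟪μ, a⟫ := by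
      show ⟪μ, a⟫ + (k:ℝ) * 0 + 0 * 0 = ⟪μ, a⟫; ring
    refine ⟨μ - (2 * ⟪μ, a⟫ / ⟪a, a⟫) • a, R.reflect_mem haΔ hμ, k, ?_⟩
    rw [affReflect_apply, h1, affForm_iota_iota]
    show ((μ, (k:ℝ), (0:ℝ)) : AffSpace V) - (2 * ⟪μ, a⟫ / ⟪a, a⟫) • ((a, (0:ℝ), (0:ℝ)) : AffSpace V) = _
    simp [Prod.ext_iff]
  · have hθΔ := theta_mem_Δ R hθ
    obtain ⟨n, hn⟩ := R.crystallographic hθΔ hμ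
    have hθθ : ⟪θ, θ⟫ ≠ 0 := (root_inner_pos R hθΔ).ne'
    have h1 : affForm ((μ, (k:ℝ), (0:ℝ)) : AffSpace V) (affDelta V - affIota θ) = -⟪μ, θ⟫ := by
      rw [affA0_eq]
      show ⟪μ, -θ⟫ + (k:ℝ) * 0 + 0 * 1 = -⟪μ, θ⟫
      rw [inner_neg_right]; ring
    have ht : 2 * affForm ((μ, (k:ℝ), (0:ℝ)) : AffSpace V) (affDelta V - affIota θ)
        / affForm (affDelta V - affIota θ) (affDelta V - affIota θ) = -(n:ℝ) := by
      rw [h1, affForm_a0_a0]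
      field_simp
      linarith [hn]
    have hcoef : (2 * ⟪μ, θ⟫ / ⟪θ, θ⟫ : ℝ) = (n:ℝ) := by
      field_simp
      linarith [hn]
    refine ⟨μ - (2 * ⟪μ, θ⟫ / ⟪θ, θ⟫) • θ, R.reflect_mem hθΔ hμ, k + n, ?_⟩
    rw [affReflect_apply, ht, affA0_eq, hcoef]
    show ((μ, (k:ℝ), (0:ℝ)) : AffSpace V) - (-(n:ℝ)) • (((-θ : V), (1:ℝ), (0:ℝ)) : AffSpace V) = _
    have h2 : ((k + n : ℤ) : ℝ) = (k:ℝ) + (n:ℝ) := by push_cast; ring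
    simp only [Prod.smul_mk, Prod.mk_sub_mk, Prod.mk.injEq, h2]
    refine ⟨by module, ?_, ?_⟩
    · simp only [smul_eq_mul]; ring
    · simp only [smul_eq_mul]; ring

lemma reflect_pos (R : RootSystemData V) {θ : V} (hθ : R.IsHighestRoot θ)
    {b : AffSpace V} (hb : b ∈ affSimpleRoots R θ)
    {x : AffSpace V} (hx : x ∈ affPosRoots R) (hne : x ≠ b) :
    affReflect b x ∈ affPosRoots R := by
  rcases pos_or_neg_ahat R (reflect_mem_ahat R hθ hb (affPos_subset_ahat R hx)) with h | h
  · exact h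
  · exfalso
    set t := 2 * affForm x b / affForm b b with hts
    obtain ⟨c, n₀, hxc⟩ := pos_decomp R θ hθ hx
    obtain ⟨c', n₀', hyc⟩ := pos_decomp R θ hθ h
    have hxy2 : comb R θ c n₀ + comb R θ c' n₀' = t • b := by
      rw [← hxc, ← hyc, affReflect_apply]; abel
    rcases (mem_affSimple_iff R θ b).1 hb with ⟨a, ha, rfl⟩ | rfl
    · -- b = affIota a
      have haΔ : a ∈ R.Δ := R.Δpos_subset (R.Pi_subset ha)
      have h1 : (∑ z ∈ R.Pi, (c z : ℝ) • z - (n₀:ℝ) • θ)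
          + (∑ z ∈ R.Pi, (c' z : ℝ) • z - (n₀':ℝ) • θ) = t • a :=
        congrArg Prod.fst hxy2
      have h2 : (n₀:ℝ) + (n₀':ℝ) = t * 0 := congrArg (fun z : AffSpace V => z.2.1) hxy2
      rw [mul_zero] at h2
      have hn₀ : (n₀:ℝ) = 0 := by
        have a1 : (0:ℝ) ≤ (n₀:ℝ) := Nat.cast_nonneg _
        have a2 : (0:ℝ) ≤ (n₀':ℝ) := Nat.cast_nonneg _
        linarith
      have hn₀' : (n₀':ℝ) = 0 := by
        have a1 : (0:ℝ) ≤ (n₀:ℝ) := Nat.cast_nonneg _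
        linarith
      set f : V → ℝ := fun z => (c z : ℝ) + (c' z : ℝ) - (if z = a then t else 0) with hf
      have hfs : ∑ z ∈ R.Pi, f z • z = 0 := by
        have hite : ∑ z ∈ R.Pi, (if z = a then t else 0) • z = t • a := by
          have hcong : ∀ z ∈ R.Pi, (if z = a then t else 0) • z
              = (if z = a then t • a else 0) := by
            intro z _
            split_ifs with hz
            · rw [hz]
            · rw [zero_smul]
          rw [Finset.sum_congr rfl hcong, Finset.sum_ite_eq' R.Pi a (fun _ => t • a)]
          simp [ha]
        have : ∑ z ∈ R.Pi, f z • z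
            = (∑ z ∈ R.Pi, (c z : ℝ) • z) + (∑ z ∈ R.Pi, (c' z : ℝ) • z)
              - ∑ z ∈ R.Pi, (if z = a then t else 0) • z := by
          rw [← Finset.sum_add_distrib, ← Finset.sum_sub_distrib]
          refine Finset.sum_congr rfl fun z _ => ?_
          rw [hf]
          simp only [sub_smul, add_smul]
        rw [this, hite]
        rw [hn₀, hn₀'] at h1
        simp only [zero_smul, sub_zero] at h1
        rw [h1]
        abel
      have hall := pi_sum_eq_zero R f hfs
      have hcz : ∀ z ∈ R.Pi, z ≠ a → (c z : ℝ) = 0 := by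
        intro z hz hza
        have h0 : (c z : ℝ) + (c' z : ℝ) - (if z = a then t else 0) = 0 := hall z hz
        rw [if_neg hza] at h0
        have a1 : (0:ℝ) ≤ (c z:ℝ) := Nat.cast_nonneg _
        have a2 : (0:ℝ) ≤ (c' z:ℝ) := Nat.cast_nonneg _
        linarith
      have hxa : x = (((c a : ℝ) • a : V), (0:ℝ), (0:ℝ)) := by
        rw [hxc]
        unfold comb
        have hsum : ∑ z ∈ R.Pi, (c z : ℝ) • z = (c a : ℝ) • a := by
          apply Finset.sum_eq_single a
          · intro z hz hza
            rw [hcz z hz hza, zero_smul]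
          · intro hna; exact absurd ha hna
        rw [hsum, hn₀]
        simp
      rcases (mem_affPosRoots_iff R x).1 hx with ⟨μ, hμ, hxe⟩ | ⟨μ, hμ, kk, hkk, hxe⟩
      · have hμe : μ = (c a : ℝ) • a := congrArg Prod.fst (hxe.symm.trans hxa)
        rcases R.reduced haΔ ((c a : ℝ)) (by rw [← hμe]; exact R.Δpos_subset hμ) with h1' | h1'
        · exact hne (by rw [hxe, hμe, h1', one_smul]; rfl)
        · have : (0:ℝ) ≤ (c a : ℝ) := Nat.cast_nonneg _
          linarith [h1']
      · have hkk0 : (kk:ℝ) = 0 := congrArg (fun z : AffSpace V => z.2.1) (hxe.symm.trans hxa)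
        have : (1:ℝ) ≤ (kk:ℝ) := by exact_mod_cast hkk
        linarith
    · -- b = α₀
      have hθΔ := theta_mem_Δ R hθ
      rw [affA0_eq] at hxy2
      have h1 : (∑ z ∈ R.Pi, (c z : ℝ) • z - (n₀:ℝ) • θ)
          + (∑ z ∈ R.Pi, (c' z : ℝ) • z - (n₀':ℝ) • θ) = t • (-θ) :=
        congrArg Prod.fst hxy2
      have h2 : (n₀:ℝ) + (n₀':ℝ) = t * 1 := congrArg (fun z : AffSpace V => z.2.1) hxy2
      rw [mul_one] at h2
      have hsum0 : ∑ z ∈ R.Pi, ((c z : ℝ) + (c' z : ℝ)) • z = 0 := by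
        have e1 : ∑ z ∈ R.Pi, ((c z : ℝ) + (c' z : ℝ)) • z
            = (∑ z ∈ R.Pi, (c z : ℝ) • z) + (∑ z ∈ R.Pi, (c' z : ℝ) • z) := by
          rw [← Finset.sum_add_distrib]
          exact Finset.sum_congr rfl fun z _ => add_smul _ _ _
        rw [e1]
        have e2 : (∑ z ∈ R.Pi, (c z : ℝ) • z) + (∑ z ∈ R.Pi, (c' z : ℝ) • z)
            = ((∑ z ∈ R.Pi, (c z : ℝ) • z - (n₀:ℝ) • θ)
              + (∑ z ∈ R.Pi, (c' z : ℝ) • z - (n₀':ℝ) • θ)) + ((n₀:ℝ) + (n₀':ℝ)) • θ := by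
          rw [add_smul]; abel
        rw [e2, h1, h2, smul_neg]
        abel
      have hall := pi_sum_eq_zero R _ hsum0
      have hcz : ∀ z ∈ R.Pi, (c z : ℝ) = 0 := by
        intro z hz
        have := hall z hz
        have a1 : (0:ℝ) ≤ (c z:ℝ) := Nat.cast_nonneg _
        have a2 : (0:ℝ) ≤ (c' z:ℝ) := Nat.cast_nonneg _
        linarith
      have hxa : x = ((-((n₀:ℝ) • θ) : V), ((n₀:ℝ)), (0:ℝ)) := by
        rw [hxc]
        unfold comb
        have hsum : ∑ z ∈ R.Pi, (c z : ℝ) • z = 0 :=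
          Finset.sum_eq_zero fun z hz => by rw [hcz z hz, zero_smul]
        rw [hsum]
        simp
      rcases (mem_affPosRoots_iff R x).1 hx with ⟨μ, hμ, hxe⟩ | ⟨μ, hμ, kk, hkk, hxe⟩
      · have hn₀0 : (0:ℝ) = (n₀:ℝ) := congrArg (fun z : AffSpace V => z.2.1) (hxe.symm.trans hxa)
        have hμe : μ = -((n₀:ℝ) • θ) := congrArg Prod.fst (hxe.symm.trans hxa)
        rw [← hn₀0] at hμe
        simp only [zero_smul, neg_zero] at hμe
        exact R.zero_not_mem (hμe ▸ R.Δpos_subset hμ)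
      · have hkkn : (kk:ℝ) = (n₀:ℝ) := congrArg (fun z : AffSpace V => z.2.1) (hxe.symm.trans hxa)
        have hμe : μ = -((n₀:ℝ) • θ) := congrArg Prod.fst (hxe.symm.trans hxa)
        have hμe' : (-(n₀:ℝ)) • θ = μ := by rw [neg_smul, ← hμe]
        rcases R.reduced hθΔ (-(n₀:ℝ)) (by rw [hμe']; exact hμ) with h1' | h1'
        · have a1 : (0:ℝ) ≤ (n₀:ℝ) := Nat.cast_nonneg _
          linarith [h1']
        · have hn1 : (n₀:ℝ) = 1 := by linarith [h1']
          apply hne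
          rw [hxe, affA0_eq]
          have : μ = -θ := by rw [hμe, hn1, one_smul]
          rw [this, hkkn, hn1]
      
end StmtAux
namespace StmtAux

variable {V : Type*} [NormedAddCommGroup V] [InnerProductSpace ℝ V] [FiniteDimensional ℝ V]

lemma weyl_form (R : RootSystemData V) (θ : V) {w : AffSpace V ≃ₗ[ℝ] AffSpace V}
    (hw : w ∈ affWeylGroup R θ) (x y : AffSpace V) :
    affForm (w x) (w y) = affForm x y := by
  revert x y
  refine Subgroup.closure_induction
    (p := fun g _ => ∀ x y, affForm (g x) (g y) = affForm x y) ?_ ?_ ?_ ?_ hw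
  · intro s hs x y
    obtain ⟨β, _, rfl⟩ := hs
    exact affForm_reflect_reflect β x y
  · intro x y; rfl
  · intro u v _ _ hu hv x y
    exact (hu (v x) (v y)).trans (hv x y)
  · intro u _ hu x y
    have hus : ∀ z, u (u⁻¹ z) = z := fun z => u.apply_symm_apply z
    have h := hu (u⁻¹ x) (u⁻¹ y)
    rw [hus x, hus y] at h
    exact h.symm

lemma weyl_ahat (R : RootSystemData V) {θ : V} (hθ : R.IsHighestRoot θ)
    {w : AffSpace V ≃ₗ[ℝ] AffSpace V} (hw : w ∈ affWeylGroup R θ) :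
    ∀ x ∈ ahat R, w x ∈ ahat R := by
  have H : (∀ x ∈ ahat R, w x ∈ ahat R) ∧ (∀ x ∈ ahat R, w⁻¹ x ∈ ahat R) := by
    refine Subgroup.closure_induction
      (p := fun g _ => (∀ x ∈ ahat R, g x ∈ ahat R) ∧ (∀ x ∈ ahat R, g⁻¹ x ∈ ahat R))
      ?_ ?_ ?_ ?_ hw
    · intro s hs
      obtain ⟨β, hβ, rfl⟩ := hs
      constructor
      · exact fun x hx => reflect_mem_ahat R hθ hβ hx
      · rw [affReflect_inv]
        exact fun x hx => reflect_mem_ahat R hθ hβ hx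
    · exact ⟨fun x hx => hx, by rw [inv_one]; exact fun x hx => hx⟩
    · intro u v _ _ hu hv
      constructor
      · intro x hx
        exact hu.1 _ (hv.1 x hx)
      · intro x hx
        rw [mul_inv_rev]
        exact hv.2 _ (hu.2 x hx)
    · intro u _ hu
      exact ⟨hu.2, by rw [inv_inv]; exact hu.1⟩
  exact H.1

lemma finsum_mem_fin {S : Set (AffSpace V)} (hS : S.Finite) (f : AffSpace V → AffSpace V) :
    ∑ᶠ x ∈ S, f x = ∑ x ∈ hS.toFinset, f x := by
  have h : S = (hS.toFinset : Set (AffSpace V)) := hS.coe_toFinset.symm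
  conv_lhs => rw [h]
  rw [finsum_mem_coe_finset]

lemma finsum_mem_linear (w : AffSpace V ≃ₗ[ℝ] AffSpace V) {S : Set (AffSpace V)}
    (hS : S.Finite) : ∑ᶠ x ∈ S, w x = w (∑ᶠ x ∈ S, x) := by
  rw [finsum_mem_fin hS (fun x => w x), finsum_mem_fin hS (fun x => x), map_sum]

lemma finsum_mem_neg_linear (w : AffSpace V ≃ₗ[ℝ] AffSpace V) {S : Set (AffSpace V)}
    (hS : S.Finite) : ∑ᶠ x ∈ S, -(w x) = -(w (∑ᶠ x ∈ S, x)) := by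
  rw [finsum_mem_fin hS (fun x => -(w x)), finsum_mem_fin hS (fun x => x), map_sum]
  rw [Finset.sum_neg_distrib]

lemma inversion_main (R : RootSystemData V) {θ : V} (hθ : R.IsHighestRoot θ)
    {w : AffSpace V ≃ₗ[ℝ] AffSpace V} (hw : w ∈ affWeylGroup R θ) :
    (affInversionSet R w).Finite ∧
      affInversionSum R w = rhoHat R θ - w⁻¹ (rhoHat R θ) := by
  refine Subgroup.closure_induction
    (p := fun g _ => (affInversionSet R g).Finite ∧
      affInversionSum R g = rhoHat R θ - g⁻¹ (rhoHat R θ)) ?_ ?_ ?_ ?_ hw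
  · -- generators
    intro s hs
    obtain ⟨β, hβ, rfl⟩ := hs
    have hβpos := simple_subset_pos R hθ hβ
    have hββ := (simple_form_pos R hθ hβ).ne'
    have hrβ : affReflect β β = -β := by
      rw [affReflect_apply, show 2 * affForm β β / affForm β β = 2 from by field_simp,
        two_smul]
      abel
    have hset : affInversionSet R (affReflect β) = {β} := by
      ext x
      constructor
      · rintro ⟨hx, hneg⟩
        rw [Set.mem_singleton_iff]
        by_contra hne
        exact pos_neg_disj R (reflect_pos R hθ hβ hx hne) hneg
      · intro hxm
        rw [Set.mem_singleton_iff] at hxm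
        subst hxm
        exact ⟨hβpos, by rw [hrβ, neg_neg]; exact hβpos⟩
    refine ⟨by rw [hset]; exact Set.finite_singleton β, ?_⟩
    show (∑ᶠ x ∈ affInversionSet R (affReflect β), x) = _
    rw [hset, finsum_mem_singleton, affReflect_inv, affReflect_apply,
      rhoHat_simple R θ hβ,
      show 2 * (affForm β β / 2) / affForm β β = 1 from by field_simp, one_smul]
    abel
  · -- identity
    have hset : affInversionSet R (1 : AffSpace V ≃ₗ[ℝ] AffSpace V) = ∅ := by
      ext x
      simp only [Set.mem_empty_iff_false, iff_false]
      rintro ⟨hx, hneg⟩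
      exact pos_neg_disj R hx hneg
    refine ⟨by rw [hset]; exact Set.finite_empty, ?_⟩
    show (∑ᶠ x ∈ affInversionSet R (1 : AffSpace V ≃ₗ[ℝ] AffSpace V), x) = _
    rw [hset, finsum_mem_empty, inv_one]
    show (0 : AffSpace V) = rhoHat R θ - rhoHat R θ
    rw [sub_self]
  · -- multiplication
    intro u v huW hvW hu' hv'
    obtain ⟨hufin, husum⟩ := hu'
    obtain ⟨hvfin, hvsum⟩ := hv'
    have hvinv : v⁻¹ ∈ affWeylGroup R θ := inv_mem hvW
    have hvs : ∀ z, v (v⁻¹ z) = z := fun z => v.apply_symm_apply z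
    have hsv : ∀ z, v⁻¹ (v z) = z := fun z => v.symm_apply_apply z
    set Nu := affInversionSet R u with hNu
    set Nv := affInversionSet R v with hNv
    set C : Set (AffSpace V) := {x | x ∈ Nu ∧ v⁻¹ x ∈ affPosRoots R} with hC
    set D : Set (AffSpace V) := {x | x ∈ Nu ∧ v⁻¹ x ∉ affPosRoots R} with hD
    set A : Set (AffSpace V) := (fun x => v⁻¹ x) '' C with hA
    set B : Set (AffSpace V) := (fun x => -(v⁻¹ x)) '' D with hB
    have hCfin : C.Finite := hufin.subset (fun x hx => hx.1)
    have hDfin : D.Finite := hufin.subset (fun x hx => hx.1)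
    have hAfin : A.Finite := hCfin.image _
    have hBfin : B.Finite := hDfin.image _
    have hBNv : B ⊆ Nv := by
      rintro γ ⟨x, ⟨hxNu, hxnp⟩, rfl⟩
      have hxpos : x ∈ affPosRoots R := hxNu.1
      have hv1 : v⁻¹ x ∈ ahat R := weyl_ahat R hθ hvinv _ (affPos_subset_ahat R hxpos)
      have hγpos : -(v⁻¹ x) ∈ affPosRoots R := (pos_or_neg_ahat R hv1).resolve_left hxnp
      refine ⟨hγpos, ?_⟩
      show -(v (-(v⁻¹ x))) ∈ affPosRoots R
      rw [map_neg, hvs, neg_neg]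
      exact hxpos
    have hset : affInversionSet R (u * v) = A ∪ (Nv \ B) := by
      ext γ
      constructor
      · rintro ⟨hγpos, hneg⟩
        have hvγ : v γ ∈ ahat R := weyl_ahat R hθ hvW _ (affPos_subset_ahat R hγpos)
        rcases pos_or_neg_ahat R hvγ with hp | hn
        · left
          refine ⟨v γ, ⟨⟨hp, hneg⟩, ?_⟩, ?_⟩
          · rw [hsv]; exact hγpos
          · exact hsv γ
        · right
          refine ⟨⟨hγpos, hn⟩, ?_⟩
          rintro ⟨x, ⟨hxNu, hxnp⟩, heq⟩
          have hvγ2 : v γ = -x := by rw [← heq, map_neg, hvs]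
          have hux : -((u * v) γ) = u x := by
            show -(u (v γ)) = u x
            rw [hvγ2, map_neg, neg_neg]
          exact pos_neg_disj R (hux ▸ hneg) hxNu.2
      · rintro (⟨x, ⟨⟨hxpos, hxneg⟩, hxvp⟩, rfl⟩ | ⟨⟨hγpos, hγneg⟩, hγB⟩)
        · refine ⟨hxvp, ?_⟩
          show -(u (v (v⁻¹ x))) ∈ affPosRoots R
          rw [hvs]
          exact hxneg
        · refine ⟨hγpos, ?_⟩
          show -(u (v γ)) ∈ affPosRoots R
          by_contra hcon
          have h1 : u (-(v γ)) ∈ ahat R :=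
            weyl_ahat R hθ huW _ (affPos_subset_ahat R hγneg)
          have h2 : u (v γ) ∈ affPosRoots R := by
            rcases pos_or_neg_ahat R h1 with hp2 | hn2
            · exact absurd (by rwa [map_neg] at hp2) hcon
            · rwa [map_neg, neg_neg] at hn2
          have hxNu2 : -(v γ) ∈ Nu := ⟨hγneg, by rw [map_neg, neg_neg]; exact h2⟩
          have hxnp2 : v⁻¹ (-(v γ)) ∉ affPosRoots R := by
            rw [map_neg, hsv]
            intro hneg2
            exact pos_neg_disj R hγpos hneg2
          refine hγB ⟨-(v γ), ⟨hxNu2, hxnp2⟩, ?_⟩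
          show -(v⁻¹ (-(v γ))) = γ
          rw [map_neg, hsv, neg_neg]
    have hdisjA : Disjoint A (Nv \ B) := by
      rw [Set.disjoint_left]
      rintro γ ⟨x, ⟨hxNu, hxvp⟩, rfl⟩ ⟨hγNv, _⟩
      have h2 := hγNv.2
      rw [show v (v⁻¹ x) = x from hvs x] at h2
      exact pos_neg_disj R hxNu.1 h2
    have hdisjCD : Disjoint C D := by
      rw [Set.disjoint_left]
      rintro x ⟨_, hxp⟩ ⟨_, hxnp⟩
      exact hxnp hxp
    have hCD : C ∪ D = Nu := by
      ext x
      constructor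
      · rintro (⟨hx, _⟩ | ⟨hx, _⟩) <;> exact hx
      · intro hx
        by_cases hp : v⁻¹ x ∈ affPosRoots R
        · exact Or.inl ⟨hx, hp⟩
        · exact Or.inr ⟨hx, hp⟩
    have hBunion : B ∪ (Nv \ B) = Nv := Set.union_diff_cancel hBNv
    refine ⟨by rw [hset]; exact hAfin.union (hvfin.diff), ?_⟩
    have hinjA : Set.InjOn (fun x => v⁻¹ x) C := fun a _ b _ hab => v⁻¹.injective hab
    have hinjB : Set.InjOn (fun x => -(v⁻¹ x)) D := fun a _ b _ hab =>
      v⁻¹.injective (neg_injective hab)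
    have hsumA : ∑ᶠ x ∈ A, x = v⁻¹ (∑ᶠ x ∈ C, x) := by
      rw [hA, finsum_mem_image hinjA]
      exact finsum_mem_linear v⁻¹ hCfin
    have hsumB : ∑ᶠ x ∈ B, x = -(v⁻¹ (∑ᶠ x ∈ D, x)) := by
      rw [hB, finsum_mem_image hinjB]
      exact finsum_mem_neg_linear v⁻¹ hDfin
    have hsumCD : (∑ᶠ x ∈ C, x) + (∑ᶠ x ∈ D, x) = ∑ᶠ x ∈ Nu, x := by
      rw [← finsum_mem_union hdisjCD hCfin hDfin, hCD]
    have hsumNvB : ∑ᶠ x ∈ Nv \ B, x = (∑ᶠ x ∈ Nv, x) - ∑ᶠ x ∈ B, x := by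
      have h := finsum_mem_union (f := fun x : AffSpace V => x) (Set.disjoint_sdiff_right) hBfin hvfin.diff
      rw [hBunion] at h
      exact eq_sub_of_add_eq' h.symm
    have hcalc : affInversionSum R (u * v) = (∑ᶠ x ∈ A, x) + ∑ᶠ x ∈ Nv \ B, x := by
      show (∑ᶠ x ∈ affInversionSet R (u * v), x) = _
      rw [hset]
      exact finsum_mem_union hdisjA hAfin (hvfin.diff)
    rw [hcalc, hsumA, hsumNvB, hsumB]
    have halg : v⁻¹ (∑ᶠ x ∈ C, x) + ((∑ᶠ x ∈ Nv, x) - -(v⁻¹ (∑ᶠ x ∈ D, x)))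
        = v⁻¹ ((∑ᶠ x ∈ C, x) + (∑ᶠ x ∈ D, x)) + ∑ᶠ x ∈ Nv, x := by
      rw [map_add]
      abel
    rw [halg, hsumCD,
      show (∑ᶠ x ∈ Nu, x) = affInversionSum R u from rfl,
      show (∑ᶠ x ∈ Nv, x) = affInversionSum R v from rfl, husum, hvsum, map_sub, mul_inv_rev]
    show v⁻¹ (rhoHat R θ) - v⁻¹ (u⁻¹ (rhoHat R θ)) + (rhoHat R θ - v⁻¹ (rhoHat R θ))
        = rhoHat R θ - v⁻¹ (u⁻¹ (rhoHat R θ))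
    abel
  · -- inverse
    intro u huW hu'
    obtain ⟨hufin, husum⟩ := hu'
    have hus : ∀ z, u (u⁻¹ z) = z := fun z => u.apply_symm_apply z
    have hsu : ∀ z, u⁻¹ (u z) = z := fun z => u.symm_apply_apply z
    have himg : affInversionSet R u⁻¹ = (fun x => -(u x)) '' affInversionSet R u := by
      ext x
      constructor
      · rintro ⟨hx, hneg⟩
        refine ⟨-(u⁻¹ x), ⟨hneg, ?_⟩, ?_⟩
        · show -(u (-(u⁻¹ x))) ∈ affPosRoots R
          rw [map_neg, neg_neg, hus]
          exact hx
        · show -(u (-(u⁻¹ x))) = x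
          rw [map_neg, neg_neg, hus]
      · rintro ⟨y, ⟨hy1, hy2⟩, rfl⟩
        refine ⟨hy2, ?_⟩
        show -(u⁻¹ (-(u y))) ∈ affPosRoots R
        rw [map_neg, hsu, neg_neg]
        exact hy1
    have hinj : Set.InjOn (fun x => -(u x)) (affInversionSet R u) := fun a _ b _ hab =>
      u.injective (neg_injective hab)
    refine ⟨by rw [himg]; exact hufin.image _, ?_⟩
    show (∑ᶠ x ∈ affInversionSet R u⁻¹, x) = _
    rw [himg, finsum_mem_image hinj, finsum_mem_neg_linear u hufin,
      show (∑ᶠ x ∈ affInversionSet R u, x) = affInversionSum R u from rfl, husum,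
      map_sub, hus, inv_inv]
    abel

end StmtAux
namespace StmtAux

variable {V : Type*} [NormedAddCommGroup V] [InnerProductSpace ℝ V] [FiniteDimensional ℝ V]

lemma sum_int_multiple {ι : Type*} {cst : ℝ} (s : Finset ι) (g : ι → ℝ)
    (h : ∀ x ∈ s, ∃ m : ℤ, g x = m * cst) : ∃ m : ℤ, ∑ x ∈ s, g x = m * cst := by
  classical
  revert h
  refine Finset.induction_on s ?_ ?_
  · intro _; exact ⟨0, by simp⟩
  · intro a t ha ih h
    obtain ⟨m1, hm1⟩ := h a (Finset.mem_insert_self a t)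
    obtain ⟨m2, hm2⟩ := ih (fun x hx => h x (Finset.mem_insert_of_mem hx))
    refine ⟨m1 + m2, ?_⟩
    rw [Finset.sum_insert ha, hm1, hm2]
    push_cast
    ring

lemma rhoHat_comb (R : RootSystemData V) (θ : V) (c : V → ℕ) (n₀ : ℕ) :
    affForm (rhoHat R θ) (comb R θ c n₀)
      = (∑ a ∈ R.Pi, (c a : ℝ) * (⟪a, a⟫ / 2)) + (n₀ : ℝ) * (⟪θ, θ⟫ / 2) := by
  rw [comb_eq_sum, affForm_add_right, affForm_smul_right, rhoHat_a0, affForm_sum_right]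
  congr 1
  refine Finset.sum_congr rfl fun a ha => ?_
  rw [affForm_smul_right, rhoHat_iota R θ ha]

lemma comb_zero_of_nonpos (R : RootSystemData V) {θ : V} (hθ : R.IsHighestRoot θ)
    {c : V → ℕ} {n₀ : ℕ} (h : affForm (rhoHat R θ) (comb R θ c n₀) ≤ 0) :
    comb R θ c n₀ = 0 := by
  rw [rhoHat_comb] at h
  have hterm : ∀ a ∈ R.Pi, (0:ℝ) ≤ (c a : ℝ) * (⟪a, a⟫ / 2) := fun a ha =>
    mul_nonneg (Nat.cast_nonneg _)
      (le_of_lt (by have := root_inner_pos R (R.Δpos_subset (R.Pi_subset ha)); linarith))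
  have hs0 : (0:ℝ) ≤ ∑ a ∈ R.Pi, (c a : ℝ) * (⟪a, a⟫ / 2) := Finset.sum_nonneg hterm
  have hθ0 : (0:ℝ) < ⟪θ, θ⟫ := root_inner_pos R (theta_mem_Δ R hθ)
  have hn0 : (0:ℝ) ≤ (n₀:ℝ) * (⟪θ, θ⟫ / 2) := mul_nonneg (Nat.cast_nonneg _) (by linarith)
  have hsum_eq : ∑ a ∈ R.Pi, (c a : ℝ) * (⟪a, a⟫ / 2) = 0 := le_antisymm (by linarith) hs0
  have hn₀' : (n₀:ℝ) = 0 := by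
    have hz : (n₀:ℝ) * (⟪θ, θ⟫ / 2) = 0 := by linarith
    rcases mul_eq_zero.mp hz with h' | h'
    · exact h'
    · linarith
  have hca : ∀ a ∈ R.Pi, (c a : ℝ) = 0 := by
    intro a ha
    have hz := (Finset.sum_eq_zero_iff_of_nonneg hterm).mp hsum_eq a ha
    rcases mul_eq_zero.mp hz with h' | h'
    · exact h'
    · have := root_inner_pos R (R.Δpos_subset (R.Pi_subset ha)); linarith
  unfold comb
  have hsum : ∑ a ∈ R.Pi, (c a : ℝ) • a = 0 :=
    Finset.sum_eq_zero fun a ha => by rw [hca a ha, zero_smul]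
  rw [hsum, hn₀']
  simp [Prod.ext_iff]

lemma form_rel (R : RootSystemData V) {θ : V} (hθ : R.IsHighestRoot θ)
    {α : V} (hα : α ∈ R.Pi) {u : AffSpace V ≃ₗ[ℝ] AffSpace V}
    (hu : u ∈ affWeylGroup R θ) :
    affForm (affInversionSum R u) (affIota α)
      = ⟪α, α⟫ / 2 - affForm (rhoHat R θ) (u (affIota α)) := by
  obtain ⟨-, hsum⟩ := inversion_main R hθ hu
  rw [hsum, affForm_sub_left, rhoHat_iota R θ hα]
  congr 1
  have h := weyl_form R θ hu (u⁻¹ (rhoHat R θ)) (affIota α)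
  rw [show u (u⁻¹ (rhoHat R θ)) = rhoHat R θ from u.apply_symm_apply _] at h
  exact h.symm

lemma key_int (R : RootSystemData V) {θ : V} (hθ : R.IsHighestRoot θ)
    {α : V} (hα : α ∈ R.Pi) {u : AffSpace V ≃ₗ[ℝ] AffSpace V}
    (hu : u ∈ affWeylGroup R θ) (hpos : u (affIota α) ∈ affPosRoots R) :
    ∃ n : ℤ, 2 * affForm (rhoHat R θ) (u (affIota α)) = n * ⟪α, α⟫ ∧ 1 ≤ n := by
  obtain ⟨hfin, -⟩ := inversion_main R hθ hu
  have hαΔ : α ∈ R.Δ := R.Δpos_subset (R.Pi_subset hα)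
  have hα2 : (0:ℝ) < ⟪α, α⟫ := root_inner_pos R hαΔ
  have hrel := form_rel R hθ hα hu
  have hint : ∃ m : ℤ, 2 * affForm (affInversionSum R u) (affIota α) = m * ⟪α, α⟫ := by
    have e1 : affInversionSum R u = ∑ x ∈ hfin.toFinset, x := finsum_mem_fin hfin (fun x => x)
    rw [e1, affForm_sum_left, Finset.mul_sum]
    apply sum_int_multiple
    intro x hx
    have hx' : x ∈ affInversionSet R u := hfin.mem_toFinset.mp hx
    have hxa : x ∈ ahat R := affPos_subset_ahat R hx'.1
    obtain ⟨m, hm⟩ := simple_pairing_int R hθ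
      ((mem_affSimple_iff R θ _).2 (Or.inl ⟨α, hα, rfl⟩)) hxa
    rw [affForm_iota_iota] at hm
    exact ⟨m, hm⟩
  obtain ⟨m, hm⟩ := hint
  refine ⟨1 - m, ?_, ?_⟩
  · rw [hrel] at hm
    push_cast
    linarith
  · by_contra hle
    push_neg at hle
    have hmle : (1:ℝ) - (m:ℝ) ≤ 0 := by
      have h1 : (1 - m : ℤ) ≤ 0 := by omega
      exact_mod_cast h1
    have h2F : 2 * affForm (rhoHat R θ) (u (affIota α)) = ((1:ℝ) - m) * ⟪α, α⟫ := by
      rw [hrel] at hm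
      push_cast
      linarith
    have hFle : affForm (rhoHat R θ) (u (affIota α)) ≤ 0 := by nlinarith
    obtain ⟨c, n₀, hcomb⟩ := pos_decomp R θ hθ hpos
    have hzero : u (affIota α) = 0 := by
      rw [hcomb]
      exact comb_zero_of_nonpos R hθ (by rw [← hcomb]; exact hFle)
    have h := weyl_form R θ hu (affIota α) (affIota α)
    rw [hzero, affForm_iota_iota] at h
    have h0 : affForm (0 : AffSpace V) (0 : AffSpace V) = 0 := by simp [affForm]
    linarith

end StmtAux

open StmtAux

/-- Lemma 2.5.  Let `w ∈ Ŵ` be a dominant element of the affine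
Weyl group.  Then for every simple root `α ∈ Π`:
(i) `(|N(w)|, α) ≤ 0`;
(ii) `(|N(w)|, α) = 0` if and only if `w(α)` is an affine simple root. -/
theorem inversionSum_nonpos_and_zero_iff_simple
    {V : Type*} [NormedAddCommGroup V] [InnerProductSpace ℝ V] [FiniteDimensional ℝ V]
    (R : RootSystemData V) (θ : V) (hθ : R.IsHighestRoot θ)
    (w : AffSpace V ≃ₗ[ℝ] AffSpace V) (hw : w ∈ affWeylGroup R θ)
    (hdom : IsDominant R w) (α : V) (hα : α ∈ R.Pi) :
    affForm (affInversionSum R w) (affIota α) ≤ 0 ∧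
    (affForm (affInversionSum R w) (affIota α) = 0 ↔
      w (affIota α) ∈ affSimpleRoots R θ) := by
  classical
  have hαΔ : α ∈ R.Δ := R.Δpos_subset (R.Pi_subset hα)
  have hα2 : (0:ℝ) < ⟪α, α⟫ := root_inner_pos R hαΔ
  have hβpos : w (affIota α) ∈ affPosRoots R := hdom α hα
  obtain ⟨n, h2F, hn1⟩ := key_int R hθ hα hw hβpos
  have hrel := form_rel R hθ hα hw
  have hval : affForm (affInversionSum R w) (affIota α) = (1 - (n:ℝ)) * (⟪α, α⟫ / 2) := by
    rw [hrel]; linarith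
  have hn1R : (1:ℝ) ≤ (n:ℝ) := by exact_mod_cast hn1
  have hββ : affForm (w (affIota α)) (w (affIota α)) = ⟪α, α⟫ :=
    (weyl_form R θ hw _ _).trans (affForm_iota_iota α α)
  refine ⟨by rw [hval]; nlinarith, ?_, ?_⟩
  · -- `= 0` implies simple
    intro h0
    by_contra hns
    have hn_eq : (n:ℝ) = 1 := by
      rw [hval] at h0
      rcases mul_eq_zero.mp h0 with h' | h'
      · linarith
      · linarith
    have hFeq : 2 * affForm (rhoHat R θ) (w (affIota α)) = ⟪α, α⟫ := by
      rw [h2F, hn_eq]; ring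
    obtain ⟨c, n₀, hcomb⟩ := pos_decomp R θ hθ hβpos
    have hexp : affForm (w (affIota α)) (w (affIota α))
        = (∑ a ∈ R.Pi, (c a : ℝ) * affForm (w (affIota α)) (affIota a))
          + (n₀:ℝ) * affForm (w (affIota α)) (affDelta V - affIota θ) := by
      have e := congrArg (fun z => affForm (w (affIota α)) z) hcomb
      rw [e, comb_eq_sum, affForm_add_right, affForm_smul_right, affForm_sum_right]
      congr 1
      exact Finset.sum_congr rfl fun a _ => affForm_smul_right _ _ _
    have hfind : ∃ b ∈ affSimpleRoots R θ, 0 < affForm (w (affIota α)) b := by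
      by_contra hno
      push_neg at hno
      have h1 : ∀ a ∈ R.Pi, (c a : ℝ) * affForm (w (affIota α)) (affIota a) ≤ 0 := fun a ha =>
        mul_nonpos_of_nonneg_of_nonpos (Nat.cast_nonneg _)
          (hno _ ((mem_affSimple_iff R θ _).2 (Or.inl ⟨a, ha, rfl⟩)))
      have h2 : (n₀:ℝ) * affForm (w (affIota α)) (affDelta V - affIota θ) ≤ 0 :=
        mul_nonpos_of_nonneg_of_nonpos (Nat.cast_nonneg _)
          (hno _ ((mem_affSimple_iff R θ _).2 (Or.inr rfl)))
      have h3 := Finset.sum_nonpos h1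
      nlinarith [hexp, hββ, hα2]
    obtain ⟨b, hbs, hbpos⟩ := hfind
    have hneq : w (affIota α) ≠ b := fun h => hns (h ▸ hbs)
    have hreflpos := reflect_pos R hθ hbs hβpos hneq
    have hgen : affReflect b ∈ affWeylGroup R θ :=
      Subgroup.subset_closure (Set.mem_image_of_mem _ hbs)
    have humem : affReflect b * w ∈ affWeylGroup R θ := mul_mem hgen hw
    have happ : (affReflect b * w) (affIota α) = affReflect b (w (affIota α)) := rfl
    obtain ⟨n', h2F', hn'1⟩ := key_int R hθ hα humem (by rw [happ]; exact hreflpos)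
    rw [happ] at h2F'
    have hbb := simple_form_pos R hθ hbs
    have hρb := rhoHat_simple R θ hbs
    have hFr : affForm (rhoHat R θ) (affReflect b (w (affIota α)))
        = affForm (rhoHat R θ) (w (affIota α))
          - (2 * affForm (w (affIota α)) b / affForm b b) * affForm (rhoHat R θ) b := by
      rw [affReflect_apply, affForm_sub_right, affForm_smul_right]
    have hXb : 2 * affForm (w (affIota α)) b / affForm b b * (affForm b b / 2)
        = affForm (w (affIota α)) b := by
      field_simp
    have hlt : (n' : ℝ) * ⟪α, α⟫ < ⟪α, α⟫ := by
      rw [← h2F', hFr, hρb]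
      linarith [hXb, hFeq, hbpos]
    have hn'lt : (n':ℝ) < 1 := by nlinarith
    have hn'lt' : n' < 1 := by exact_mod_cast hn'lt
    omega
  · -- simple implies `= 0`
    intro hs
    rw [hrel, rhoHat_simple R θ hs, hββ]
    ring

end
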